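/- For M > 2 an integer and Δ ∈ [0, 1/M], the function g(Δ) = sin²(MΔπ)/(M² sin²(Δπ)) + sin²(M(1/M − Δ)π)/(M² sin²((1/M − Δ)π)) (interpreted by continuity at the endpoints, where it equals 1) satisfies g(Δ) ≥ 8/π², with minimum attained at Δ = 1/(2M). -/

import Mathlib

open Real Finset

lemma sin_le_sin' {a b : ℝ} (ha : 0 ≤ a) (hab : a ≤ b) (hsum : a + b ≤ π) :
    Real.sin a ≤ Real.sin b := by
  rcases le_total b (π/2) with hb | hb
  · exact Real.strictMonoOn_sin.monotoneOn ⟨by linarith [Real.pi_pos], by linarith⟩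
      ⟨by linarith [Real.pi_pos], hb⟩ hab
  · rw [← Real.sin_pi_sub b]
    exact Real.strictMonoOn_sin.monotoneOn ⟨by linarith [Real.pi_pos], by linarith⟩
      ⟨by linarith, by linarith⟩ (by linarith)

lemma mono_core (a b : ℝ) (ha : 0 ≤ a) (hab : a ≤ b) {φ : ℝ} (hφ : 0 ≤ φ)
    (hs : (a + b) * φ ≤ π) :
    b - a ≤ b * Real.cos (a * φ) - a * Real.cos (b * φ) := by
  set F : ℝ → ℝ := fun t => b * Real.cos (a * t) - a * Real.cos (b * t) with hF
  have hder : ∀ t : ℝ, HasDerivAt F (a * b * (Real.sin (b * t) - Real.sin (a * t))) t := by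
    intro t
    have h1 : HasDerivAt (fun t : ℝ => Real.cos (a * t)) (-Real.sin (a * t) * a) t :=
      (Real.hasDerivAt_cos (a * t)).comp t (by simpa using (hasDerivAt_id t).const_mul a)
    have h2 : HasDerivAt (fun t : ℝ => Real.cos (b * t)) (-Real.sin (b * t) * b) t :=
      (Real.hasDerivAt_cos (b * t)).comp t (by simpa using (hasDerivAt_id t).const_mul b)
    have : HasDerivAt F (b * (-Real.sin (a * t) * a) - a * (-Real.sin (b * t) * b)) t :=
      (h1.const_mul b).sub (h2.const_mul a)
    convert this using 1
    ring
  have hmono : MonotoneOn F (Set.Icc 0 φ) := by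
    apply monotoneOn_of_deriv_nonneg (convex_Icc 0 φ)
    · exact (Continuous.continuousOn (by continuity))
    · intro t ht
      exact (hder t).differentiableAt.differentiableWithinAt
    · intro t ht
      rw [interior_Icc] at ht
      rw [(hder t).deriv]
      have h0 : 0 ≤ a * t := mul_nonneg ha ht.1.le
      have hle : a * t ≤ b * t := mul_le_mul_of_nonneg_right hab ht.1.le
      have hsum2 : a * t + b * t ≤ π := by
        have : (a + b) * t ≤ (a + b) * φ :=
          mul_le_mul_of_nonneg_left ht.2.le (by linarith)
        nlinarith
      have h3 := sin_le_sin' h0 hle hsum2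
      have h4 : 0 ≤ a * b := mul_nonneg ha (ha.trans hab)
      nlinarith
  have := hmono (Set.left_mem_Icc.2 hφ) (Set.mem_Icc.2 ⟨hφ, le_refl φ⟩) hφ
  simpa [hF] using this

lemma dirichlet (x : ℝ) : ∀ M : ℕ, Real.sin ((2 * M + 1) * x) =
    Real.sin x * (1 + 2 * ∑ d ∈ Finset.range M, Real.cos (2 * (d + 1) * x)) := by
  intro M
  induction M with
  | zero => simp
  | succ n ih =>
    have key : Real.sin ((2 * ((n:ℝ) + 1) + 1) * x) - Real.sin ((2 * (n:ℝ) + 1) * x)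
        = 2 * Real.sin x * Real.cos (2 * ((n:ℝ) + 1) * x) := by
      rw [Real.sin_sub_sin]
      ring_nf
    rw [Finset.sum_range_succ]
    push_cast at key ih ⊢
    linarith [key, ih]

lemma sin_sq_sub (A B : ℝ) :
    Real.sin (A + B) * Real.sin (A - B) = Real.sin A ^ 2 - Real.sin B ^ 2 := by
  rw [Real.sin_add, Real.sin_sub]
  have h1 := Real.sin_sq_add_cos_sq A
  have h2 := Real.sin_sq_add_cos_sq B
  nlinarith

lemma fejer (x : ℝ) (M : ℕ) : Real.sin (M * x) ^ 2 =
    Real.sin x ^ 2 * (2 * ∑ d ∈ Finset.range M, ((M : ℝ) - d) * Real.cos (2 * d * x) - M) := by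
  induction M with
  | zero => simp
  | succ n ih =>
    have key := sin_sq_sub (((n:ℝ) + 1) * x) ((n:ℝ) * x)
    have harg1 : ((n:ℝ) + 1) * x + (n:ℝ) * x = (2 * (n:ℝ) + 1) * x := by ring
    have harg2 : ((n:ℝ) + 1) * x - (n:ℝ) * x = x := by ring
    rw [harg1, harg2] at key
    have hd := dirichlet x n
    have hC : ∑ d ∈ Finset.range (n+1), Real.cos (2 * (d:ℝ) * x)
        = 1 + ∑ d ∈ Finset.range n, Real.cos (2 * ((d:ℝ) + 1) * x) := by
      rw [Finset.sum_range_succ']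
      push_cast
      simp [add_comm]
    have hS : ∑ d ∈ Finset.range (n+1), (((n:ℕ)+1 : ℝ) - d) * Real.cos (2 * (d:ℝ) * x)
        = ∑ d ∈ Finset.range n, ((n:ℝ) - d) * Real.cos (2 * (d:ℝ) * x)
          + ∑ d ∈ Finset.range (n+1), Real.cos (2 * (d:ℝ) * x) := by
      rw [Finset.sum_range_succ, Finset.sum_range_succ (fun d => Real.cos (2 * (d:ℝ) * x))]
      have hsplit : ∑ d ∈ Finset.range n, (((n:ℕ)+1 : ℝ) - d) * Real.cos (2 * (d:ℝ) * x)
          = ∑ d ∈ Finset.range n, ((n:ℝ) - d) * Real.cos (2 * (d:ℝ) * x)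
            + ∑ d ∈ Finset.range n, Real.cos (2 * (d:ℝ) * x) := by
        rw [← Finset.sum_add_distrib]
        apply Finset.sum_congr rfl
        intro d _
        push_cast
        ring
      rw [hsplit]
      push_cast
      ring
    push_cast at hd ih hC hS ⊢
    rw [hS, hC]
    have key2 : Real.sin (((n:ℝ) + 1) * x) ^ 2 = Real.sin ((n:ℝ) * x) ^ 2
        + (Real.sin x * (1 + 2 * ∑ d ∈ Finset.range n, Real.cos (2 * ((d:ℝ) + 1) * x))) * Real.sin x := by
      rw [← hd]
      linarith
    rw [key2, ih]
    ring

lemma sum_reflect' (M : ℕ) (f : ℕ → ℝ) (h0 : f 0 = 0) (hM : f M = 0) :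
    ∑ d ∈ Finset.range M, f (M - d) = ∑ d ∈ Finset.range M, f d := by
  have h1 : ∑ d ∈ Finset.range M, f (M - (M - 1 - d)) = ∑ d ∈ Finset.range M, f (M - d) :=
    Finset.sum_range_reflect (fun d => f (M - d)) M
  have h2 : ∀ d ∈ Finset.range M, f (M - (M - 1 - d)) = f (d + 1) := by
    intro d hd
    rw [Finset.mem_range] at hd
    congr 1
    omega
  rw [Finset.sum_congr rfl h2] at h1
  rw [← h1]
  have h3 := (Finset.sum_range_succ' f M).symm.trans (Finset.sum_range_succ f M)
  rw [h0, hM] at h3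
  linarith

lemma E_core (a b φ : ℝ) (ha : 0 ≤ a) (hab : a ≤ b) (hpos : 0 < a + b)
    (hφ : (a + b) * |φ| ≤ π) :
    0 ≤ Real.cos (a * π / (a + b)) * (b * (Real.cos (a * φ) - 1) - a * (Real.cos (b * φ) - 1)) := by
  have hb : 0 ≤ b := ha.trans hab
  have hcosnn : 0 ≤ Real.cos (a * π / (a + b)) := by
    apply Real.cos_nonneg_of_mem_Icc
    constructor
    · have : 0 ≤ a * π / (a + b) := by positivity
      linarith [Real.pi_pos]
    · rw [div_le_iff₀ hpos]
      nlinarith [Real.pi_pos]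
  have habs : ∀ c : ℝ, 0 ≤ c → Real.cos (c * φ) = Real.cos (c * |φ|) := by
    intro c hc
    rw [← abs_of_nonneg hc, ← abs_mul, Real.cos_abs, abs_of_nonneg hc]
  have hm := mono_core a b ha hab (abs_nonneg φ) hφ
  rw [habs a ha, habs b hb]
  apply mul_nonneg hcosnn
  linarith

lemma E_nonneg (a b φ : ℝ) (ha : 0 ≤ a) (hb : 0 ≤ b) (hpos : 0 < a + b)
    (hφ : (a + b) * |φ| ≤ π) :
    0 ≤ Real.cos (a * π / (a + b)) * (b * (Real.cos (a * φ) - 1) - a * (Real.cos (b * φ) - 1)) := by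
  rcases le_total a b with hab | hab
  · exact E_core a b φ ha hab hpos hφ
  · have h := E_core b a φ hb hab (by linarith) (by rwa [add_comm b a])
    have hrw : Real.cos (b * π / (b + a)) = -Real.cos (a * π / (a + b)) := by
      have hne : a + b ≠ 0 := ne_of_gt hpos
      have harg : b * π / (b + a) = π - a * π / (a + b) := by
        rw [add_comm b a, eq_sub_iff_add_eq, ← add_div, ← add_mul, add_comm b a,
          mul_comm, mul_div_assoc, div_self hne, mul_one]
      rw [harg, Real.cos_pi_sub]
    rw [hrw] at h
    nlinarith [h]

lemma key_sum (M : ℕ) (hM : 0 < M) (φ : ℝ) (hφ : |φ| ≤ π / M) :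
    ∑ d ∈ Finset.range M, ((M:ℝ) - d) * Real.cos (d * π / M)
      ≤ ∑ d ∈ Finset.range M, ((M:ℝ) - d) * Real.cos (d * π / M) * Real.cos (d * φ) := by
  set f : ℕ → ℝ := fun d => ((M:ℝ) - d) * Real.cos (d * π / M) * (Real.cos (d * φ) - 1) with hf
  suffices h : 0 ≤ ∑ d ∈ Finset.range M, f d by
    have hdiff : ∑ d ∈ Finset.range M, ((M:ℝ) - d) * Real.cos (d * π / M) * Real.cos (d * φ)
        - ∑ d ∈ Finset.range M, ((M:ℝ) - d) * Real.cos (d * π / M)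
        = ∑ d ∈ Finset.range M, f d := by
      rw [← Finset.sum_sub_distrib]
      apply Finset.sum_congr rfl
      intro d _
      rw [hf]
      ring
    linarith [h, hdiff]
  · have h0 : f 0 = 0 := by simp [hf]
    have hMM : f M = 0 := by simp [hf]
    have hrefl := sum_reflect' M f h0 hMM
    have hdouble : 2 * ∑ d ∈ Finset.range M, f d
        = ∑ d ∈ Finset.range M, (f d + f (M - d)) := by
      rw [Finset.sum_add_distrib, hrefl]
      ring
    have hterm : ∀ d ∈ Finset.range M, 0 ≤ f d + f (M - d) := by
      intro d hd
      rw [Finset.mem_range] at hd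
      rcases Nat.eq_zero_or_pos d with h | h
      · subst h
        simp only [Nat.sub_zero, h0, hMM, zero_add, le_refl]
      · set a : ℝ := (d : ℝ) with hadef
        set b : ℝ := (M : ℝ) - d with hbdef
        have hcast : ((M - d : ℕ) : ℝ) = b := by
          rw [hbdef, Nat.cast_sub hd.le]
        have hab : a + b = M := by rw [hadef, hbdef]; ring
        have hpos : 0 < a + b := by rw [hab]; positivity
        have hbnn : 0 ≤ b := by
          rw [hbdef]
          have : (d:ℝ) ≤ M := by exact_mod_cast hd.le
          linarith
        have hE := E_nonneg a b φ (by positivity) hbnn hpos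
          (by rw [hab]; rw [le_div_iff₀ (by positivity : (0:ℝ) < M), mul_comm] at hφ; exact hφ)
        rw [hab] at hE
        have hcosb : Real.cos (b * π / M) = -Real.cos (a * π / M) := by
          have harg : b * π / M = π - a * π / M := by
            rw [hbdef, hadef]
            field_simp
          rw [harg, Real.cos_pi_sub]
        have hfd : f d + f (M - d)
            = Real.cos (a * π / M) * (b * (Real.cos (a * φ) - 1) - a * (Real.cos (b * φ) - 1)) := by
          rw [hf]
          simp only [hcast]
          rw [hcosb]
          push_cast
          rw [← hadef, ← hbdef]
          ring
        rw [hfd]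
        exact hE
    have := Finset.sum_nonneg hterm
    linarith

set_option maxHeartbeats 1600000 in
theorem phase_estimation_success (M : ℕ) (hM : 2 < M) :
    let g : ℝ → ℝ := fun Δ =>
      if Δ = 0 ∨ Δ = 1 / M then 1
      else Real.sin (M * Δ * Real.pi) ^ 2 / ((M : ℝ) ^ 2 * Real.sin (Δ * Real.pi) ^ 2) +
        Real.sin (M * (1 / M - Δ) * Real.pi) ^ 2 /
          ((M : ℝ) ^ 2 * Real.sin ((1 / M - Δ) * Real.pi) ^ 2)
    (∀ Δ ∈ Set.Icc (0 : ℝ) (1 / M), 8 / Real.pi ^ 2 ≤ g Δ) ∧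
      ∀ Δ ∈ Set.Icc (0 : ℝ) (1 / M), g (1 / (2 * M)) ≤ g Δ := by
  intro g
  have hM0 : (0:ℝ) < M := by positivity
  have hMne : (M:ℝ) ≠ 0 := ne_of_gt hM0
  have hM3 : (3:ℝ) ≤ M := by exact_mod_cast hM
  have hMinv : (1:ℝ)/M ≤ 1/3 := by
    apply div_le_div_of_nonneg_left (by norm_num) (by norm_num) hM3
  -- formula on the interior
  have gform : ∀ Δ : ℝ, 0 < Δ → Δ < 1/M →
      g Δ = (4 * (∑ d ∈ Finset.range M, ((M:ℝ) - d) * Real.cos (d * π / M) *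
        Real.cos (d * ((2*Δ - 1/M) * π))) - 2*M) / (M:ℝ)^2 := by
    intro Δ h0 h1
    have hne : ¬ (Δ = 0 ∨ Δ = 1/(M:ℝ)) := by
      push_neg
      exact ⟨ne_of_gt h0, ne_of_lt h1⟩
    simp only [g]
    rw [if_neg hne]
    have hx1 : (0:ℝ) < Δ * π := by positivity
    have hx1' : Δ * π < π := by
      nlinarith [Real.pi_pos]
    have hx2 : (0:ℝ) < (1/M - Δ) * π := by
      have : (0:ℝ) < 1/M - Δ := by linarith
      positivity
    have hx2' : (1/M - Δ) * π < π := by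
      nlinarith [Real.pi_pos]
    have hs1 : Real.sin (Δ * π) ≠ 0 := ne_of_gt (Real.sin_pos_of_pos_of_lt_pi hx1 hx1')
    have hs2 : Real.sin ((1/M - Δ) * π) ≠ 0 := ne_of_gt (Real.sin_pos_of_pos_of_lt_pi hx2 hx2')
    have h1' : Real.sin ((M:ℝ) * Δ * π) ^ 2 / ((M:ℝ)^2 * Real.sin (Δ * π)^2)
        = (2 * ∑ d ∈ Finset.range M, ((M:ℝ) - d) * Real.cos (2 * d * (Δ * π)) - M) / (M:ℝ)^2 := by
      rw [show (M:ℝ) * Δ * π = (M:ℕ) * (Δ * π) from by push_cast; ring, fejer (Δ * π) M,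
        mul_comm ((M:ℝ)^2) (Real.sin (Δ * π)^2),
        mul_div_mul_left _ _ (pow_ne_zero 2 hs1)]
    have h2' : Real.sin ((M:ℝ) * (1/M - Δ) * π) ^ 2 / ((M:ℝ)^2 * Real.sin ((1/M - Δ) * π)^2)
        = (2 * ∑ d ∈ Finset.range M, ((M:ℝ) - d) * Real.cos (2 * d * ((1/M - Δ) * π)) - M)
          / (M:ℝ)^2 := by
      rw [show (M:ℝ) * (1/M - Δ) * π = (M:ℕ) * ((1/M - Δ) * π) from by push_cast; ring,
        fejer ((1/M - Δ) * π) M,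
        mul_comm ((M:ℝ)^2) (Real.sin ((1/M - Δ) * π)^2),
        mul_div_mul_left _ _ (pow_ne_zero 2 hs2)]
    rw [h1', h2', ← add_div]
    congr 1
    have hpair : ∑ d ∈ Finset.range M, ((M:ℝ) - d) * Real.cos (2 * d * (Δ * π))
        + ∑ d ∈ Finset.range M, ((M:ℝ) - d) * Real.cos (2 * d * ((1/M - Δ) * π))
        = 2 * ∑ d ∈ Finset.range M, ((M:ℝ) - d) * Real.cos (d * π / M) *
            Real.cos (d * ((2*Δ - 1/M) * π)) := by
      rw [← Finset.sum_add_distrib, Finset.mul_sum]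
      apply Finset.sum_congr rfl
      intro d _
      have hc := Real.cos_add_cos (2 * d * (Δ * π)) (2 * d * ((1/M - Δ) * π))
      have ha1 : (2 * (d:ℝ) * (Δ * π) + 2 * d * ((1/M - Δ) * π)) / 2 = d * π / M := by
        field_simp
        ring
      have ha2 : (2 * (d:ℝ) * (Δ * π) - 2 * d * ((1/M - Δ) * π)) / 2
          = d * ((2*Δ - 1/M) * π) := by ring
      rw [ha1, ha2] at hc
      calc ((M:ℝ) - d) * Real.cos (2 * d * (Δ * π))
            + ((M:ℝ) - d) * Real.cos (2 * d * ((1/M - Δ) * π))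
          = ((M:ℝ) - d) * (Real.cos (2 * d * (Δ * π)) + Real.cos (2 * d * ((1/M - Δ) * π))) := by
            ring
        _ = ((M:ℝ) - d) * (2 * Real.cos (d * π / M) * Real.cos (d * ((2*Δ - 1/M) * π))) := by
            rw [hc]
        _ = 2 * (((M:ℝ) - d) * Real.cos (d * π / M) * Real.cos (d * ((2*Δ - 1/M) * π))) := by
            ring
    linarith [hpair]
  -- midpoint facts
  have hmid0 : (0:ℝ) < 1/(2*(M:ℝ)) := by positivity
  have hmid1 : 1/(2*(M:ℝ)) < 1/(M:ℝ) := by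
    rw [div_lt_div_iff₀ (by positivity) hM0]
    nlinarith
  have hφmid : (2*(1/(2*(M:ℝ))) - 1/(M:ℝ)) * π = 0 := by
    field_simp
    ring
  have gmidform : g (1/(2*(M:ℝ)))
      = (4 * (∑ d ∈ Finset.range M, ((M:ℝ) - d) * Real.cos (d * π / M)) - 2*M) / (M:ℝ)^2 := by
    have hsumeq : ∑ d ∈ Finset.range M, ((M:ℝ) - d) * Real.cos (d * π / M) *
          Real.cos (d * ((2*(1/(2*(M:ℝ))) - 1/(M:ℝ)) * π))
        = ∑ d ∈ Finset.range M, ((M:ℝ) - d) * Real.cos (d * π / M) :=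
      Finset.sum_congr rfl (fun d _ => by rw [hφmid, mul_zero, Real.cos_zero, mul_one])
    rw [gform _ hmid0 hmid1, hsumeq]
  have hcomp : ∀ Δ : ℝ, 0 < Δ → Δ < 1/(M:ℝ) → g (1/(2*(M:ℝ))) ≤ g Δ := by
    intro Δ h0 h1
    rw [gform Δ h0 h1, gmidform]
    have habs : |(2*Δ - 1/(M:ℝ)) * π| ≤ π / M := by
      rw [abs_mul, abs_of_nonneg Real.pi_pos.le]
      have hle : |2*Δ - 1/(M:ℝ)| ≤ 1/M := abs_le.2 ⟨by linarith, by linarith⟩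
      calc |2*Δ - 1/(M:ℝ)| * π ≤ (1/M) * π := mul_le_mul_of_nonneg_right hle Real.pi_pos.le
        _ = π / M := by ring
    have hks := key_sum M (by omega) _ habs
    gcongr
  -- value of g at midpoint
  have hmidne : ¬ (1/(2*(M:ℝ)) = 0 ∨ 1/(2*(M:ℝ)) = 1/(M:ℝ)) := by
    push_neg
    exact ⟨ne_of_gt hmid0, ne_of_lt hmid1⟩
  set s : ℝ := Real.sin ((1/(2*(M:ℝ))) * π) with hsdef
  set x : ℝ := (1/(2*(M:ℝ))) * π with hxdef
  have hxpos : 0 < x := by rw [hxdef]; positivity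
  have hxpi : x < π := by
    rw [hxdef]
    nlinarith [Real.pi_pos]
  have hspos : 0 < s := Real.sin_pos_of_pos_of_lt_pi hxpos hxpi
  have hMx : (M:ℝ) * x = π / 2 := by
    rw [hxdef]
    field_simp
  have hmidval : g (1/(2*(M:ℝ))) = 2 / ((M:ℝ)^2 * s^2) := by
    simp only [g]
    rw [if_neg hmidne]
    have e2 : 1/(M:ℝ) - 1/(2*(M:ℝ)) = 1/(2*(M:ℝ)) := by
      field_simp
      ring
    have e1 : (M:ℝ) * (1/(2*(M:ℝ))) * π = π/2 := by
      field_simp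
    rw [e2, e1, Real.sin_pi_div_two, ← hxdef, ← hsdef, one_pow]
    ring
  have hxle : x ≤ π/6 := by
    rw [hxdef]
    rw [div_mul_eq_mul_div, div_le_div_iff₀ (by positivity) (by norm_num)]
    nlinarith [Real.pi_pos]
  have hsle : s ≤ x := Real.sin_le hxpos.le
  have hcube : x - x^3/4 < s := by
    have := Real.sin_gt_sub_cube hxpos
    nlinarith [pow_pos hxpos 3]
  -- bounds at midpoint
  have bound1 : 8 / π^2 ≤ g (1/(2*(M:ℝ))) := by
    rw [hmidval, div_le_div_iff₀ (by positivity) (by positivity)]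
    have h2 : (M:ℝ) * s ≤ π/2 := by
      rw [← hMx]
      exact mul_le_mul_of_nonneg_left hsle hM0.le
    have h3 : 0 ≤ (M:ℝ) * s := by positivity
    nlinarith [h2, h3]
  have bound2 : g (1/(2*(M:ℝ))) ≤ 1 := by
    rw [hmidval, div_le_one (by positivity)]
    have h4 : π/2 - (π/2) * x^2 / 4 ≤ (M:ℝ) * s := by
      have := mul_le_mul_of_nonneg_left hcube.le hM0.le
      calc π/2 - (π/2) * x^2 / 4 = (M:ℝ)*x - ((M:ℝ)*x) * x^2/4 := by rw [hMx]
        _ = (M:ℝ) * (x - x^3/4) := by ring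
        _ ≤ (M:ℝ) * s := this
    have h5 : 0 ≤ (M:ℝ) * s := by positivity
    have hxn : x ≤ 0.525 := by linarith [Real.pi_lt_d2, hxle]
    have hx2 : x^2 ≤ 0.276 := by nlinarith [hxpos.le, hxn]
    have h7 : (π/2) * x^2/4 ≤ 0.11 := by
      nlinarith [mul_le_mul Real.pi_lt_d2.le hx2 (sq_nonneg x) (by norm_num : (0:ℝ) ≤ 3.15)]
    have h8 : (1.46 : ℝ) ≤ (M:ℝ)*s := by linarith [h4, h7, Real.pi_gt_d6]
    nlinarith [h8, h5]
  have bound3 : 8 / π^2 ≤ 1 := by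
    rw [div_le_one (by positivity)]
    nlinarith [Real.pi_gt_d6]
  -- final assembly
  constructor <;> intro Δ hΔ <;> obtain ⟨hl, hr⟩ := hΔ <;>
    by_cases hc : Δ = 0 ∨ Δ = 1/(M:ℝ)
  · have hgΔ : g Δ = 1 := by
      simp only [g]
      rw [if_pos hc]
    rw [hgΔ]
    exact bound3
  · push_neg at hc
    have h0 : 0 < Δ := lt_of_le_of_ne hl (Ne.symm hc.1)
    have h1 : Δ < 1/(M:ℝ) := lt_of_le_of_ne hr hc.2
    linarith [bound1, hcomp Δ h0 h1]
  · have hgΔ : g Δ = 1 := by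
      simp only [g]
      rw [if_pos hc]
    rw [hgΔ]
    exact bound2
  · push_neg at hc
    have h0 : 0 < Δ := lt_of_le_of_ne hl (Ne.symm hc.1)
    have h1 : Δ < 1/(M:ℝ) := lt_of_le_of_ne hr hc.2
    exact hcomp Δ h0 h1
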